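/- Let $n \ge 4$, let $C$ be the Cartan matrix of type $D_n$, and let $Z \in \mathbb{C}^n$ with $Z_i \ne 0$ for all $i$. Define $\mathrm{vol}(Z) = \left| \sum_{i,j=1}^n (C^{-1})_{ij} Z_i \overline{Z_j} \right|$ and $\mathrm{sys}(Z) = \min_{1 \le i \le n} |Z_i|$. Then $\mathrm{sys}(Z)^2 \le \frac{2(n-1)}{n} \mathrm{vol}(Z)$. -/

import Mathlib

open Matrix Finset

/-- Adjacency in the `Dₙ` Dynkin diagram (1-indexed vertices). -/
def adjD (n a b : ℕ) : Prop :=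
  (a + 1 = b ∧ b ≤ n - 2) ∨ (b + 1 = a ∧ a ≤ n - 2) ∨
    (a = n - 2 ∧ (b = n - 1 ∨ b = n)) ∨ (b = n - 2 ∧ (a = n - 1 ∨ a = n))

instance (n a b : ℕ) : Decidable (adjD n a b) := by unfold adjD; infer_instance

/-- The Cartan matrix of type `Dₙ`, over the complex numbers. -/
def cartanD (n : ℕ) : Matrix (Fin n) (Fin n) ℂ :=
  Matrix.of fun i j =>
    if i = j then 2 else if adjD n (i.val + 1) (j.val + 1) then -1 else 0


def Bmat (n : ℕ) : Matrix (Fin n) (Fin n) ℂ :=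
  Matrix.of fun i k =>
    if i.val = n - 1 then (if k.val = n - 2 ∨ k.val = n - 1 then 1 else 0)
    else if k.val = i.val then 1 else if k.val = i.val + 1 then -1 else 0

noncomputable def Emat (n : ℕ) : Matrix (Fin n) (Fin n) ℂ :=
  Matrix.of fun i k =>
    if k.val = n - 1 then 1/2
    else if k.val = n - 2 then (if i.val = n - 1 then -(1/2) else 1/2)
    else if i.val ≤ k.val then 1 else 0

lemma rowB (n : ℕ) (hn : 4 ≤ n) (i : Fin n) (f : Fin n → ℂ) :
    ∑ k, Bmat n i k * f k =
      if h : i.val = n - 1 then f ⟨n-2, by omega⟩ + f ⟨n-1, by omega⟩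
      else f i - f ⟨i.val + 1, by omega⟩ := by
  by_cases h : i.val = n - 1
  · rw [dif_pos h]
    have : ∀ k : Fin n, Bmat n i k * f k =
        (if k = (⟨n-2, by omega⟩ : Fin n) then f k else 0)
        + (if k = (⟨n-1, by omega⟩ : Fin n) then f k else 0) := by
      intro k
      simp only [Bmat, Matrix.of_apply, h, if_pos, Fin.ext_iff]
      split_ifs <;> simp_all <;> omega
    rw [Finset.sum_congr rfl (fun k _ => this k), Finset.sum_add_distrib,
      Finset.sum_ite_eq' univ, Finset.sum_ite_eq' univ]
    simp
  · have hi : i.val + 1 ≤ n - 1 := by omega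
    rw [dif_neg h]
    have : ∀ k : Fin n, Bmat n i k * f k =
        (if k = i then f k else 0)
        + (if k = (⟨i.val+1, by omega⟩ : Fin n) then -f k else 0) := by
      intro k
      simp only [Bmat, Matrix.of_apply, h, if_neg, Fin.ext_iff]
      split_ifs <;> simp_all <;> omega
    rw [Finset.sum_congr rfl (fun k _ => this k), Finset.sum_add_distrib,
      Finset.sum_ite_eq' univ, Finset.sum_ite_eq' univ]
    simp [sub_eq_add_neg]

lemma BE (n : ℕ) (hn : 4 ≤ n) : Bmat n * Emat n = 1 := by
  ext i j
  rw [Matrix.mul_apply, rowB n hn i (fun k => Emat n k j)]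
  simp only [Emat, Matrix.of_apply, Matrix.one_apply, Fin.ext_iff]
  split_ifs <;> (try norm_num) <;> omega

lemma CBB (n : ℕ) (hn : 4 ≤ n) : cartanD n = Bmat n * (Bmat n)ᵀ := by
  ext i j
  rw [Matrix.mul_apply]
  have : ∀ k, Bmat n i k * (Bmat n)ᵀ k j = Bmat n i k * (fun k => Bmat n j k) k := by
    intro k; rfl
  rw [Finset.sum_congr rfl (fun k _ => this k), rowB n hn i (fun k => Bmat n j k)]
  simp only [cartanD, Bmat, adjD, Matrix.of_apply, Fin.ext_iff]
  split_ifs <;> try norm_num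
  all_goals (try omega)
  all_goals simp_all
  all_goals (split_ifs <;> (try norm_num) <;> omega)

lemma Ereal (n : ℕ) (i k : Fin n) : (starRingEnd ℂ) (Emat n i k) = Emat n i k := by
  simp only [Emat, Matrix.of_apply]
  split_ifs <;> norm_num [Complex.ext_iff]

lemma nsq_add_le (x y : ℂ) : Complex.normSq (x + y) ≤ 2 * Complex.normSq x + 2 * Complex.normSq y := by
  rw [← Complex.sq_norm, ← Complex.sq_norm x, ← Complex.sq_norm y]
  have h := norm_add_le x y
  have hx := norm_nonneg x
  have hy := norm_nonneg y
  have hxy := norm_nonneg (x + y)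
  have h2 : ‖x + y‖ ^ 2 ≤ (‖x‖ + ‖y‖) ^ 2 :=
    pow_le_pow_left₀ hxy h 2
  nlinarith [sq_nonneg (‖x‖ - ‖y‖)]

lemma nsq_sub_le (x y : ℂ) : Complex.normSq (x - y) ≤ 2 * Complex.normSq x + 2 * Complex.normSq y := by
  have := nsq_add_le x (-y)
  simpa [sub_eq_add_neg] using this

theorem systolic_inequality_typeD (n : ℕ) (hn : 4 ≤ n) (Z : Fin n → ℂ)
    (hZ : ∀ i, Z i ≠ 0) :
    (Finset.univ.inf' (Finset.univ_nonempty_iff.mpr ⟨⟨0, by omega⟩⟩)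
        (fun i : Fin n => ‖Z i‖)) ^ 2
      ≤ (2 * ((n : ℝ) - 1) / n) *
          ‖∑ i : Fin n, ∑ j : Fin n,
            (cartanD n)⁻¹ i j * Z i * (starRingEnd ℂ) (Z j)‖ := by
  set W : Fin n → ℂ := (Emat n).mulVec Z with hW
  set SW : ℝ := ∑ k, Complex.normSq (W k) with hSW
  have hBinv : (Bmat n)⁻¹ = Emat n := Matrix.inv_eq_right_inv (BE n hn)
  have hCinv : (cartanD n)⁻¹ = (Emat n)ᵀ * Emat n := by
    rw [CBB n hn, Matrix.mul_inv_rev, ← Matrix.transpose_nonsing_inv, hBinv]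
  -- the double sum equals SW
  have key : ∀ (i j : Fin n), (cartanD n)⁻¹ i j * Z i * (starRingEnd ℂ) (Z j)
      = ∑ k, (Emat n k i * Z i) * (Emat n k j * (starRingEnd ℂ) (Z j)) := by
    intro i j
    rw [hCinv, Matrix.mul_apply, Finset.sum_mul, Finset.sum_mul]
    exact Finset.sum_congr rfl fun k _ => by rw [Matrix.transpose_apply]; ring
  have hsum : (∑ i : Fin n, ∑ j : Fin n,
      (cartanD n)⁻¹ i j * Z i * (starRingEnd ℂ) (Z j)) = ((SW : ℝ) : ℂ) := by
    calc ∑ i : Fin n, ∑ j : Fin n, (cartanD n)⁻¹ i j * Z i * (starRingEnd ℂ) (Z j)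
        = ∑ i : Fin n, ∑ j : Fin n, ∑ k : Fin n,
            (Emat n k i * Z i) * (Emat n k j * (starRingEnd ℂ) (Z j)) := by
          exact Finset.sum_congr rfl fun i _ => Finset.sum_congr rfl fun j _ => key i j
      _ = ∑ k : Fin n, ∑ i : Fin n, ∑ j : Fin n,
            (Emat n k i * Z i) * (Emat n k j * (starRingEnd ℂ) (Z j)) := by
          rw [Finset.sum_congr rfl fun i _ => Finset.sum_comm, Finset.sum_comm]
      _ = ∑ k : Fin n, (∑ i : Fin n, Emat n k i * Z i) *
            (∑ j : Fin n, Emat n k j * (starRingEnd ℂ) (Z j)) := by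
          exact Finset.sum_congr rfl fun k _ => (Finset.sum_mul_sum _ _ _ _).symm
      _ = ∑ k : Fin n, W k * (starRingEnd ℂ) (W k) := by
          refine Finset.sum_congr rfl fun k _ => ?_
          have h1 : (∑ i : Fin n, Emat n k i * Z i) = W k := by
            simp [hW, Matrix.mulVec, dotProduct]
          have h2 : (∑ j : Fin n, Emat n k j * (starRingEnd ℂ) (Z j))
              = (starRingEnd ℂ) (W k) := by
            rw [hW]
            show _ = (starRingEnd ℂ) (∑ j, Emat n k j * Z j)
            rw [map_sum]
            exact Finset.sum_congr rfl fun j _ => by rw [_root_.map_mul, Ereal]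
          rw [h1, h2]
      _ = ((SW : ℝ) : ℂ) := by
          simp [Complex.mul_conj, hSW]
  obtain ⟨m, rfl⟩ : ∃ m, n = m + 1 := ⟨n - 1, by omega⟩
  have hm : 3 ≤ m := by omega
  have hZBW : Z = (Bmat (m+1)).mulVec W := by
    rw [hW, Matrix.mulVec_mulVec, BE (m+1) hn, Matrix.one_mulVec]
  have hZrow : ∀ i : Fin (m+1), Z i =
      if h : i.val = (m+1) - 1 then W ⟨(m+1)-2, by omega⟩ + W ⟨(m+1)-1, by omega⟩
      else W i - W ⟨i.val + 1, by omega⟩ := by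
    intro i
    have : Z i = ∑ k, Bmat (m+1) i k * W k := by
      rw [hZBW]; simp [Matrix.mulVec, dotProduct]
    rw [this, rowB (m+1) hn i W]
  have hgnn : ∀ k : Fin (m+1), 0 ≤ Complex.normSq (W k) :=
    fun k => Complex.normSq_nonneg _
  have hSWnn : 0 ≤ SW := Finset.sum_nonneg fun k _ => hgnn k
  have h1 : ∑ i : Fin m, Complex.normSq (W i.castSucc) ≤ SW := by
    rw [hSW, Fin.sum_univ_castSucc (fun k => Complex.normSq (W k))]
    have := hgnn (Fin.last m); linarith
  have h2 : ∑ i : Fin m, Complex.normSq (W i.succ) ≤ SW := by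
    rw [hSW, Fin.sum_univ_succ (fun k => Complex.normSq (W k))]
    have := hgnn 0; linarith
  have hpair : Complex.normSq (W ⟨(m+1)-2, by omega⟩) + Complex.normSq (W ⟨(m+1)-1, by omega⟩) ≤ SW := by
    have hne : (⟨(m+1)-2, by omega⟩ : Fin (m+1)) ≠ ⟨(m+1)-1, by omega⟩ := by
      simp [Fin.ext_iff]; omega
    have hsub := Finset.sum_le_sum_of_subset_of_nonneg
      (Finset.subset_univ ({⟨(m+1)-2, by omega⟩, ⟨(m+1)-1, by omega⟩} : Finset (Fin (m+1))))
      (fun k _ _ => hgnn k)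
    rwa [Finset.sum_pair hne] at hsub
  have hsum6 : ∑ i : Fin (m+1), Complex.normSq (Z i) ≤ 6 * SW := by
    rw [Fin.sum_univ_castSucc (fun i => Complex.normSq (Z i))]
    have hlast : Complex.normSq (Z (Fin.last m)) ≤ 2 * SW := by
      rw [hZrow (Fin.last m), dif_pos (by simp [Fin.last])]
      have := nsq_add_le (W ⟨(m+1)-2, by omega⟩) (W ⟨(m+1)-1, by omega⟩)
      linarith
    have hchain : ∀ i : Fin m, Complex.normSq (Z i.castSucc)
        ≤ 2 * Complex.normSq (W i.castSucc) + 2 * Complex.normSq (W i.succ) := by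
      intro i
      rw [hZrow i.castSucc, dif_neg (by rw [show ((i.castSucc : Fin (m+1)) : ℕ) = (i : ℕ) from rfl]; omega)]
      have : (⟨(i.castSucc).val + 1, Nat.succ_lt_succ i.isLt⟩ : Fin (m+1)) = i.succ := by
        simp [Fin.ext_iff]
      rw [this]
      exact nsq_sub_le _ _
    have : ∑ i : Fin m, Complex.normSq (Z i.castSucc)
        ≤ ∑ i : Fin m, (2 * Complex.normSq (W i.castSucc) + 2 * Complex.normSq (W i.succ)) :=
      Finset.sum_le_sum fun i _ => hchain i
    rw [Finset.sum_add_distrib, ← Finset.mul_sum, ← Finset.mul_sum] at this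
    linarith
  -- now the min part
  suffices H : ∀ (hne : (Finset.univ : Finset (Fin (m+1))).Nonempty),
      (Finset.univ.inf' hne (fun i : Fin (m+1) => ‖Z i‖)) ^ 2
        ≤ (2 * (((m+1 : ℕ) : ℝ) - 1) / ((m+1 : ℕ) : ℝ)) *
          ‖∑ i : Fin (m+1), ∑ j : Fin (m+1),
            (cartanD (m+1))⁻¹ i j * Z i * (starRingEnd ℂ) (Z j)‖ by
    exact H _
  intro hne
  set s : ℝ := Finset.univ.inf' hne (fun i : Fin (m+1) => ‖Z i‖) with hs
  obtain ⟨i0, -, hi0⟩ := Finset.exists_mem_eq_inf' hne (fun i : Fin (m+1) => ‖Z i‖)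
  have hs0 : 0 ≤ s := by rw [hs, hi0]; exact norm_nonneg _
  have hsle : ∀ i : Fin (m+1), s ≤ ‖Z i‖ :=
    fun i => Finset.inf'_le _ (Finset.mem_univ i)
  have hcard : ((m+1 : ℕ) : ℝ) * s ^ 2 ≤ ∑ i : Fin (m+1), Complex.normSq (Z i) := by
    have := Finset.card_nsmul_le_sum Finset.univ (fun i : Fin (m+1) => Complex.normSq (Z i))
      (s ^ 2) (fun i _ => by show s ^ 2 ≤ Complex.normSq (Z i); rw [← Complex.sq_norm]; exact pow_le_pow_left₀ hs0 (hsle i) 2)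
    simpa [Finset.card_univ, nsmul_eq_mul] using this
  rw [hsum, Complex.norm_real, Real.norm_of_nonneg hSWnn]
  have hmn : (4 : ℝ) ≤ ((m+1 : ℕ) : ℝ) := by exact_mod_cast hn
  have hnpos : (0 : ℝ) < ((m+1 : ℕ) : ℝ) := by positivity
  rw [div_mul_eq_mul_div, le_div_iff₀ (by push_cast at hnpos ⊢; linarith)]
  push_cast at hcard hmn ⊢
  nlinarith [hcard, hsum6, hSWnn, hmn]
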